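/- Let G be a finite abelian p-group and e ≥ 2. The ring homomorphism Z_{p^e} → Z_{p^{e−1}} induces a surjective group homomorphism f̄ : V(Z_{p^e}G) → V(Z_{p^{e−1}}G) between the groups of normalized units, whose kernel is 1 + p^{e−1}ω(Z_{p^e}G), an elementary abelian p-group of order p^(|G|−1). -/

import Mathlib

/-- The augmentation map of a group ring. -/
noncomputable def aug (R G : Type*) [CommRing R] [CommGroup G] :
    MonoidAlgebra R G →ₐ[R] R := MonoidAlgebra.lift R R G 1

/-- The augmentation ideal of a group ring. -/
noncomputable def augIdeal (R G : Type*) [CommRing R] [CommGroup G] :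
    Ideal (MonoidAlgebra R G) := RingHom.ker (aug R G).toRingHom

/-- The group of normalized units of a group ring. -/
noncomputable def Vgrp (R G : Type*) [CommRing R] [CommGroup G] :
    Subgroup (MonoidAlgebra R G)ˣ :=
  MonoidHom.ker (Units.map ((aug R G).toRingHom : MonoidAlgebra R G →* R))

/-- Reduction of coefficients `Z_{p^e} → Z_{p^{e-1}}`, extended to group rings. -/
noncomputable def fbar (p e : ℕ) (G : Type*) [CommGroup G] :
    MonoidAlgebra (ZMod (p ^ e)) G →+* MonoidAlgebra (ZMod (p ^ (e - 1))) G :=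
  MonoidAlgebra.liftNCRingHom
    (MonoidAlgebra.singleOneRingHom.comp
      (ZMod.castHom (pow_dvd_pow p (Nat.sub_le e 1)) (ZMod (p ^ (e - 1)))))
    (MonoidAlgebra.of _ G) (fun _ _ => Commute.all _ _)

section
variable (p e : ℕ) {G : Type*} [CommGroup G]

lemma fbar_single (g : G) (r : ZMod (p^e)) :
    fbar p e G (MonoidAlgebra.single g r) =
      MonoidAlgebra.single g
        (ZMod.castHom (pow_dvd_pow p (Nat.sub_le e 1)) (ZMod (p ^ (e - 1))) r) := by
  simp [fbar, MonoidAlgebra.liftNCRingHom, MonoidAlgebra.liftNC_single,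
    MonoidAlgebra.singleOneRingHom, MonoidAlgebra.single_mul_single]

lemma aug_single {R : Type*} [CommRing R] (g : G) (r : R) :
    aug R G (MonoidAlgebra.single g r) = r := by
  simp [aug, MonoidAlgebra.lift_single]

lemma fbar_coeff (x : MonoidAlgebra (ZMod (p^e)) G) (g : G) :
    (fbar p e G x).coeff g =
      ZMod.castHom (pow_dvd_pow p (Nat.sub_le e 1)) (ZMod (p ^ (e - 1))) (x.coeff g) := by
  induction x using MonoidAlgebra.induction_linear with
  | zero => simp
  | add a b ha hb =>
      rw [map_add, MonoidAlgebra.coeff_add, Finsupp.add_apply, ha, hb, MonoidAlgebra.coeff_add,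
          Finsupp.add_apply, map_add]
  | single a r =>
      rw [fbar_single]
      rcases eq_or_ne a g with h | h
      · subst h; simp
      · rw [MonoidAlgebra.coeff_single, MonoidAlgebra.coeff_single,
          Finsupp.single_eq_of_ne h.symm, Finsupp.single_eq_of_ne h.symm, map_zero]

lemma aug_fbar (x : MonoidAlgebra (ZMod (p^e)) G) :
    aug (ZMod (p^(e-1))) G (fbar p e G x) =
      ZMod.castHom (pow_dvd_pow p (Nat.sub_le e 1)) (ZMod (p ^ (e - 1)))
        (aug (ZMod (p^e)) G x) := by
  induction x using MonoidAlgebra.induction_linear with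
  | zero => simp
  | add a b ha hb => rw [map_add, map_add, ha, hb, map_add, map_add]
  | single a r => rw [fbar_single, aug_single, aug_single]

lemma fbar_surjective (hp : p.Prime) : Function.Surjective (fbar p e G) := by
  haveI : NeZero (p^(e-1)) := ⟨pow_ne_zero _ hp.pos.ne'⟩
  intro y
  induction y using MonoidAlgebra.induction_linear with
  | zero => exact ⟨0, map_zero _⟩
  | add a b ha hb =>
      obtain ⟨x1, h1⟩ := ha; obtain ⟨x2, h2⟩ := hb
      exact ⟨x1 + x2, by rw [map_add, h1, h2]⟩
  | single g s =>
      refine ⟨MonoidAlgebra.single g ((s.val : ZMod (p^e))), ?_⟩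
      rw [fbar_single, map_natCast, ZMod.natCast_zmod_val]
end

section
variable (p e : ℕ) {G : Type*} [CommGroup G]

lemma P_eq : ((p : MonoidAlgebra (ZMod (p^e)) G))^(e-1) =
    MonoidAlgebra.single (1:G) ((p : ZMod (p^e))^(e-1)) := by
  rw [← Nat.cast_pow, MonoidAlgebra.natCast_def, Nat.cast_pow]

lemma zmod_cast_eq_zero_iff (hp : p.Prime) (a : ZMod (p^e)) :
    ZMod.castHom (pow_dvd_pow p (Nat.sub_le e 1)) (ZMod (p ^ (e - 1))) a = 0 ↔
      ∃ b, a = (p : ZMod (p^e))^(e-1) * b := by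
  haveI : NeZero (p^e) := ⟨pow_ne_zero _ hp.pos.ne'⟩
  constructor
  · intro h
    have hv : a = ((a.val : ℕ) : ZMod (p^e)) := (ZMod.natCast_zmod_val a).symm
    rw [hv, map_natCast, ZMod.natCast_eq_zero_iff] at h
    obtain ⟨m, hm⟩ := h
    exact ⟨(m : ZMod (p^e)), by rw [hv, hm]; push_cast; ring⟩
  · rintro ⟨b, rfl⟩
    rw [map_mul, map_pow, map_natCast, ← Nat.cast_pow,
      ZMod.natCast_eq_zero_iff _ _ |>.mpr dvd_rfl, zero_mul]

lemma ker_fbar_iff (hp : p.Prime) (x : MonoidAlgebra (ZMod (p^e)) G) :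
    fbar p e G x = 0 ↔
      ∃ y, x = ((p : MonoidAlgebra (ZMod (p^e)) G))^(e-1) * y := by
  constructor
  · intro h
    have hc : ∀ g : G, ∃ b, x.coeff g = (p : ZMod (p^e))^(e-1) * b := by
      intro g
      rw [← zmod_cast_eq_zero_iff p e hp, ← fbar_coeff, h]
      rfl
    refine ⟨x.coeff.support.sum (fun g => MonoidAlgebra.single g (hc g).choose), ?_⟩
    rw [Finset.mul_sum]
    have : ∀ g ∈ x.coeff.support,
        ((p : MonoidAlgebra (ZMod (p^e)) G))^(e-1) *
          MonoidAlgebra.single g ((hc g).choose) = MonoidAlgebra.single g (x.coeff g) := by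
      intro g _
      rw [P_eq, MonoidAlgebra.single_mul_single, one_mul, ← (hc g).choose_spec]
    rw [Finset.sum_congr rfl this]
    exact (MonoidAlgebra.sum_coeff_single x).symm
  · rintro ⟨y, rfl⟩
    have : fbar p e G (((p : MonoidAlgebra (ZMod (p^e)) G))^(e-1)) = 0 := by
      rw [map_pow, map_natCast, ← Nat.cast_pow, MonoidAlgebra.natCast_def,
        ZMod.natCast_self, MonoidAlgebra.single_zero]
    rw [map_mul, this, zero_mul]

lemma PP_zero (hp : p.Prime) (he : 2 ≤ e) :
    ((p : MonoidAlgebra (ZMod (p^e)) G))^(e-1) *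
      ((p : MonoidAlgebra (ZMod (p^e)) G))^(e-1) = 0 := by
  haveI : NeZero (p^e) := ⟨pow_ne_zero _ hp.pos.ne'⟩
  rw [← pow_add, ← Nat.cast_pow, MonoidAlgebra.natCast_def,
    (ZMod.natCast_eq_zero_iff _ _).mpr (pow_dvd_pow p (by omega)),
    MonoidAlgebra.single_zero]

lemma pP_zero (hp : p.Prime) (he : 2 ≤ e) :
    (p : MonoidAlgebra (ZMod (p^e)) G) *
      ((p : MonoidAlgebra (ZMod (p^e)) G))^(e-1) = 0 := by
  haveI : NeZero (p^e) := ⟨pow_ne_zero _ hp.pos.ne'⟩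
  have h1 : (p : MonoidAlgebra (ZMod (p^e)) G) *
      ((p : MonoidAlgebra (ZMod (p^e)) G))^(e-1) =
      ((p : MonoidAlgebra (ZMod (p^e)) G))^(1+(e-1)) := by rw [pow_add, pow_one]
  rw [h1, ← Nat.cast_pow, MonoidAlgebra.natCast_def,
    (ZMod.natCast_eq_zero_iff _ _).mpr (pow_dvd_pow p (by omega)),
    MonoidAlgebra.single_zero]

lemma ker_sq_zero (hp : p.Prime) (he : 2 ≤ e) {x y : MonoidAlgebra (ZMod (p^e)) G}
    (hx : fbar p e G x = 0) (hy : fbar p e G y = 0) : x * y = 0 := by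
  obtain ⟨a, rfl⟩ := (ker_fbar_iff p e hp x).mp hx
  obtain ⟨b, rfl⟩ := (ker_fbar_iff p e hp y).mp hy
  have := PP_zero p e (G := G) hp he
  calc ((p : MonoidAlgebra (ZMod (p^e)) G))^(e-1) * a *
      (((p : MonoidAlgebra (ZMod (p^e)) G))^(e-1) * b)
      = (((p : MonoidAlgebra (ZMod (p^e)) G))^(e-1) *
         ((p : MonoidAlgebra (ZMod (p^e)) G))^(e-1)) * (a * b) := by ring
    _ = 0 := by rw [this, zero_mul]

lemma one_add_pow (R : Type*) [CommRing R] (k : R) (hk : k * k = 0) (n : ℕ) :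
    (1 + k)^n = 1 + n * k := by
  induction n with
  | zero => simp
  | succ m ih =>
      rw [pow_succ, ih]
      have : (1 + (m:R) * k) * (1 + k) = 1 + ((m:R)+1) * k + (m:R) * (k * k) := by ring
      rw [this, hk, mul_zero, add_zero]
      push_cast
      ring
end

section count
variable (p e : ℕ) (G : Type*) [CommGroup G] [Fintype G]

noncomputable def Isub : AddSubgroup (ZMod (p^e)) :=
  AddMonoidHom.ker
    (ZMod.castHom (pow_dvd_pow p (Nat.sub_le e 1)) (ZMod (p ^ (e - 1)))).toAddMonoidHom

lemma card_Isub (hp : p.Prime) (he : 2 ≤ e) : Nat.card (Isub p e) = p := by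
  haveI : NeZero (p^(e-1)) := ⟨pow_ne_zero _ hp.pos.ne'⟩
  set f := (ZMod.castHom (pow_dvd_pow p (Nat.sub_le e 1))
    (ZMod (p ^ (e - 1)))).toAddMonoidHom with hf
  have hsurj : Function.Surjective f := by
    intro s
    exact ⟨((s.val : ℕ) : ZMod (p^e)), by
      show ZMod.castHom (pow_dvd_pow p (Nat.sub_le e 1)) (ZMod (p ^ (e - 1)))
        ((s.val : ℕ) : ZMod (p^e)) = s
      rw [map_natCast, ZMod.natCast_zmod_val]⟩
  have hq := QuotientAddGroup.quotientKerEquivOfSurjective f hsurj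
  have hcard := AddSubgroup.card_eq_card_quotient_mul_card_addSubgroup (AddMonoidHom.ker f)
  rw [Nat.card_congr hq.toEquiv, Nat.card_zmod, Nat.card_zmod] at hcard
  have h1 : p^e = p^(e-1) * p := by
    rw [← pow_succ]; congr 1; omega
  have h2 : 0 < p^(e-1) := pow_pos hp.pos _
  have h3 : p^(e-1) * p = p^(e-1) * Nat.card (AddMonoidHom.ker f) := h1.symm.trans hcard
  show Nat.card (AddMonoidHom.ker f) = p
  exact (Nat.eq_of_mul_eq_mul_left h2 h3).symm

noncomputable def Aker : AddSubgroup (MonoidAlgebra (ZMod (p^e)) G) :=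
  AddMonoidHom.ker (fbar p e G).toAddMonoidHom

lemma mem_Aker_iff (x : MonoidAlgebra (ZMod (p^e)) G) :
    x ∈ Aker p e G ↔ fbar p e G x = 0 := Iff.rfl

noncomputable def AkerEquiv : (Aker p e G) ≃ (G → (Isub p e)) :=
  (Equiv.subtypeEquiv (MonoidAlgebra.coeffEquiv.trans Finsupp.equivFunOnFinite) (by
    intro x
    rw [mem_Aker_iff]
    constructor
    · intro h g
      show ZMod.castHom (pow_dvd_pow p (Nat.sub_le e 1)) (ZMod (p ^ (e - 1))) (x.coeff g) = 0
      rw [← fbar_coeff, h]; rfl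
    · intro h
      ext g
      rw [fbar_coeff]
      exact h g)).trans (Equiv.subtypePiEquivPi)

lemma card_Aker : Nat.card (Aker p e G) = Nat.card (Isub p e) ^ Fintype.card G := by
  rw [Nat.card_congr (AkerEquiv p e G), Nat.card_fun]
  congr 1
  exact Nat.card_eq_fintype_card

noncomputable def augA : (Aker p e G) →+ ZMod (p^e) :=
  ((aug (ZMod (p^e)) G).toRingHom.toAddMonoidHom).comp (Aker p e G).subtype

lemma range_augA (hp : p.Prime) : (augA p e G).range = Isub p e := by
  ext t
  constructor
  · rintro ⟨⟨x, hx⟩, rfl⟩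
    show ZMod.castHom (pow_dvd_pow p (Nat.sub_le e 1)) (ZMod (p ^ (e - 1)))
      (aug (ZMod (p^e)) G x) = 0
    rw [← aug_fbar, (mem_Aker_iff p e G x).mp hx, map_zero]
  · intro ht
    refine ⟨⟨MonoidAlgebra.single 1 t, ?_⟩, ?_⟩
    · rw [mem_Aker_iff, fbar_single,
        show ZMod.castHom (pow_dvd_pow p (Nat.sub_le e 1)) (ZMod (p^(e-1))) t = 0 from ht,
        MonoidAlgebra.single_zero]
    · exact aug_single 1 t

lemma card_kerAugA (hp : p.Prime) (he : 2 ≤ e) :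
    Nat.card (AddMonoidHom.ker (augA p e G)) * p = p ^ Fintype.card G := by
  have hq := QuotientAddGroup.quotientKerEquivRange (augA p e G)
  have hcard := AddSubgroup.card_eq_card_quotient_mul_card_addSubgroup
    (AddMonoidHom.ker (augA p e G))
  rw [Nat.card_congr hq.toEquiv, range_augA p e G hp, card_Isub p e hp he,
    card_Aker, card_Isub p e hp he] at hcard
  rw [mul_comm] at hcard
  exact hcard.symm

lemma card_Kset (hp : p.Prime) (he : 2 ≤ e) :
    Nat.card {x : MonoidAlgebra (ZMod (p^e)) G //
        fbar p e G x = 0 ∧ aug (ZMod (p^e)) G x = 0} = p ^ (Fintype.card G - 1) := by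
  have hequiv : (AddMonoidHom.ker (augA p e G)) ≃
      {x : MonoidAlgebra (ZMod (p^e)) G //
        fbar p e G x = 0 ∧ aug (ZMod (p^e)) G x = 0} :=
    { toFun := fun a => ⟨a.1.1, (mem_Aker_iff p e G _).mp a.1.2, a.2⟩
      invFun := fun x => ⟨⟨x.1, (mem_Aker_iff p e G _).mpr x.2.1⟩, x.2.2⟩
      left_inv := fun a => rfl
      right_inv := fun x => rfl }
  rw [← Nat.card_congr hequiv]
  have h := card_kerAugA p e G hp he
  have hG1 : 1 ≤ Fintype.card G := Fintype.card_pos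
  have h2 : p ^ Fintype.card G = p ^ (Fintype.card G - 1) * p := by
    rw [← pow_succ]; congr 1; omega
  rw [h2] at h
  exact Nat.eq_of_mul_eq_mul_right hp.pos h

end count

section main
variable (p e : ℕ) {G : Type*} [CommGroup G]

lemma mem_Vgrp_iff {R : Type*} [CommRing R] (u : (MonoidAlgebra R G)ˣ) :
    u ∈ Vgrp R G ↔ aug R G (u : MonoidAlgebra R G) = 1 := by
  rw [Vgrp, MonoidHom.mem_ker, Units.ext_iff]
  simp [Units.coe_map]

lemma map_fbar_eq_one_iff (u : (MonoidAlgebra (ZMod (p^e)) G)ˣ) :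
    Units.map (fbar p e G).toMonoidHom u = 1 ↔
      fbar p e G (u : MonoidAlgebra (ZMod (p^e)) G) = 1 := by
  rw [Units.ext_iff]
  simp [Units.coe_map]

lemma fbar_P_zero : fbar p e G (((p : MonoidAlgebra (ZMod (p^e)) G))^(e-1)) = 0 := by
  rw [map_pow, map_natCast, ← Nat.cast_pow, MonoidAlgebra.natCast_def,
    ZMod.natCast_self, MonoidAlgebra.single_zero]

lemma PPR_zero (hp : p.Prime) (he : 2 ≤ e) :
    ((p : ZMod (p^e)))^(e-1) * ((p : ZMod (p^e)))^(e-1) = 0 := by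
  haveI : NeZero (p^e) := ⟨pow_ne_zero _ hp.pos.ne'⟩
  rw [← pow_add, ← Nat.cast_pow,
    (ZMod.natCast_eq_zero_iff _ _).mpr (pow_dvd_pow p (by omega))]

lemma algebraMap_eq_single {R : Type*} [CommRing R] (r : R) :
    algebraMap R (MonoidAlgebra R G) r = MonoidAlgebra.single 1 r := by
  rw [MonoidAlgebra.coe_algebraMap]
  simp

end main

section parts
variable (p e : ℕ) {G : Type*} [CommGroup G]

lemma part1 (u : (MonoidAlgebra (ZMod (p^e)) G)ˣ) (hu : u ∈ Vgrp (ZMod (p^e)) G) :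
    Units.map (fbar p e G).toMonoidHom u ∈ Vgrp (ZMod (p^(e-1))) G := by
  rw [mem_Vgrp_iff] at hu ⊢
  show aug (ZMod (p^(e-1))) G
    ((Units.map (fbar p e G).toMonoidHom u : (MonoidAlgebra (ZMod (p^(e-1))) G)ˣ) :
      MonoidAlgebra (ZMod (p^(e-1))) G) = 1
  rw [Units.coe_map]
  show aug (ZMod (p^(e-1))) G (fbar p e G (u : MonoidAlgebra (ZMod (p^e)) G)) = 1
  rw [aug_fbar, hu, map_one]

lemma part4 (hp : p.Prime) (he : 2 ≤ e) (u : (MonoidAlgebra (ZMod (p^e)) G)ˣ)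
    (h1 : Units.map (fbar p e G).toMonoidHom u = 1) : u ^ p = 1 := by
  rw [map_fbar_eq_one_iff] at h1
  set k := (u : MonoidAlgebra (ZMod (p^e)) G) - 1 with hk
  have hker : fbar p e G k = 0 := by rw [hk, map_sub, h1, map_one, sub_self]
  obtain ⟨y, hy⟩ := (ker_fbar_iff p e hp k).mp hker
  have hkk : k * k = 0 := ker_sq_zero p e hp he hker hker
  have hpk : (p : MonoidAlgebra (ZMod (p^e)) G) * k = 0 := by
    rw [hy, ← mul_assoc, pP_zero p e hp he, zero_mul]
  apply Units.ext
  rw [Units.val_pow_eq_pow_val, Units.val_one]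
  have hu : (u : MonoidAlgebra (ZMod (p^e)) G) = 1 + k := by rw [hk]; ring
  rw [hu, one_add_pow _ k hkk p, hpk, add_zero]

lemma part3 (hp : p.Prime) (he : 2 ≤ e) (u : (MonoidAlgebra (ZMod (p^e)) G)ˣ)
    (hu : u ∈ Vgrp (ZMod (p^e)) G) :
    Units.map (fbar p e G).toMonoidHom u = 1 ↔
      ∃ z ∈ augIdeal (ZMod (p^e)) G,
        (u : MonoidAlgebra (ZMod (p^e)) G) =
          1 + (p : MonoidAlgebra (ZMod (p^e)) G) ^ (e - 1) * z := by
  rw [mem_Vgrp_iff] at hu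
  constructor
  · intro h1
    rw [map_fbar_eq_one_iff] at h1
    set k := (u : MonoidAlgebra (ZMod (p^e)) G) - 1 with hk
    have hker : fbar p e G k = 0 := by rw [hk, map_sub, h1, map_one, sub_self]
    obtain ⟨z₀, hz₀⟩ := (ker_fbar_iff p e hp k).mp hker
    have haugk : aug (ZMod (p^e)) G k = 0 := by rw [hk, map_sub, hu, map_one, sub_self]
    have haugP : aug (ZMod (p^e)) G ((p : MonoidAlgebra (ZMod (p^e)) G)^(e-1)) =
        (p : ZMod (p^e))^(e-1) := by rw [map_pow, map_natCast]
    have h0 : (p : ZMod (p^e))^(e-1) * aug (ZMod (p^e)) G z₀ = 0 := by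
      rw [← haugP, ← map_mul, ← hz₀, haugk]
    set z := z₀ - MonoidAlgebra.single (1:G) (aug (ZMod (p^e)) G z₀) with hzdef
    have hPz : (p : MonoidAlgebra (ZMod (p^e)) G)^(e-1) * z =
        (p : MonoidAlgebra (ZMod (p^e)) G)^(e-1) * z₀ := by
      rw [hzdef, mul_sub, P_eq, MonoidAlgebra.single_mul_single, one_mul, h0,
        MonoidAlgebra.single_zero, sub_zero]
    refine ⟨z, ?_, ?_⟩
    · rw [augIdeal, RingHom.mem_ker]
      show aug (ZMod (p^e)) G z = 0
      rw [hzdef, map_sub, aug_single, sub_self]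
    · rw [hPz, ← hz₀, hk]; ring
  · rintro ⟨z, _, hval⟩
    rw [map_fbar_eq_one_iff, hval, map_add, map_mul, fbar_P_zero, zero_mul,
      add_zero, map_one]

lemma part2 (hp : p.Prime) (he : 2 ≤ e) (v : (MonoidAlgebra (ZMod (p^(e-1))) G)ˣ)
    (hv : v ∈ Vgrp (ZMod (p^(e-1))) G) :
    ∃ u ∈ Vgrp (ZMod (p^e)) G, Units.map (fbar p e G).toMonoidHom u = v := by
  rw [mem_Vgrp_iff] at hv
  obtain ⟨w₀, hw₀⟩ := fbar_surjective p e hp (v : MonoidAlgebra (ZMod (p^(e-1))) G)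
  obtain ⟨w₁, hw₁⟩ := fbar_surjective p e hp
    ((v⁻¹ : (MonoidAlgebra (ZMod (p^(e-1))) G)ˣ) : MonoidAlgebra (ZMod (p^(e-1))) G)
  set k := w₀ * w₁ - 1 with hkdef
  have hker : fbar p e G k = 0 := by
    rw [hkdef, map_sub, map_mul, hw₀, hw₁, map_one, Units.mul_inv, sub_self]
  have hkk : k * k = 0 := ker_sq_zero p e hp he hker hker
  have hw01 : w₀ * w₁ = 1 + k := by rw [hkdef]; ring
  have hmul : w₀ * (w₁ * (1 - k)) = 1 := by
    calc w₀ * (w₁ * (1 - k)) = (w₀ * w₁) * (1 - k) := by ring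
      _ = (1 + k) * (1 - k) := by rw [hw01]
      _ = 1 - k * k := by ring
      _ = 1 := by rw [hkk, sub_zero]
  set a := aug (ZMod (p^e)) G w₀ with hadef
  have ha : ZMod.castHom (pow_dvd_pow p (Nat.sub_le e 1)) (ZMod (p^(e-1))) a = 1 := by
    rw [hadef, ← aug_fbar, hw₀, hv]
  have ha0 : ZMod.castHom (pow_dvd_pow p (Nat.sub_le e 1)) (ZMod (p^(e-1))) (a - 1) = 0 := by
    rw [map_sub, ha, map_one, sub_self]
  obtain ⟨b, hb⟩ := (zmod_cast_eq_zero_iff p e hp _).mp ha0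
  have haa : (a - 1) * (a - 1) = 0 := by
    rw [hb]
    calc (p : ZMod (p^e))^(e-1) * b * ((p : ZMod (p^e))^(e-1) * b)
        = ((p : ZMod (p^e))^(e-1) * (p : ZMod (p^e))^(e-1)) * (b * b) := by ring
      _ = 0 := by rw [PPR_zero p e hp he, zero_mul]
  have hau : a * (2 - a) = 1 := by
    have h2 : a * (2 - a) = 1 - (a - 1) * (a - 1) := by ring
    rw [h2, haa, sub_zero]
  refine ⟨⟨w₀ * algebraMap (ZMod (p^e)) _ (2 - a),
      algebraMap (ZMod (p^e)) _ a * (w₁ * (1 - k)), ?_, ?_⟩, ?_, ?_⟩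
  · calc w₀ * algebraMap (ZMod (p^e)) _ (2 - a) *
        (algebraMap (ZMod (p^e)) _ a * (w₁ * (1 - k)))
        = (algebraMap (ZMod (p^e)) _ (2 - a) * algebraMap (ZMod (p^e)) _ a) *
            (w₀ * (w₁ * (1 - k))) := by ring
      _ = 1 := by rw [← map_mul, hmul, mul_one, mul_comm (2-a) a, hau, map_one]
  · calc algebraMap (ZMod (p^e)) _ a * (w₁ * (1 - k)) *
        (w₀ * algebraMap (ZMod (p^e)) _ (2 - a))
        = (algebraMap (ZMod (p^e)) _ a * algebraMap (ZMod (p^e)) _ (2 - a)) *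
            (w₀ * (w₁ * (1 - k))) := by ring
      _ = 1 := by rw [← map_mul, hmul, mul_one, hau, map_one]
  · rw [mem_Vgrp_iff]
    show aug (ZMod (p^e)) G (w₀ * algebraMap (ZMod (p^e)) _ (2 - a)) = 1
    rw [map_mul, AlgHom.commutes, ← hadef]
    show a * (algebraMap (ZMod (p^e)) (ZMod (p^e)) (2 - a)) = 1
    rw [Algebra.algebraMap_self_apply, hau]
  · apply Units.ext
    rw [Units.coe_map]
    show fbar p e G (w₀ * algebraMap (ZMod (p^e)) _ (2 - a)) =
      (v : MonoidAlgebra (ZMod (p^(e-1))) G)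
    rw [map_mul, hw₀, algebraMap_eq_single, fbar_single, map_sub, ha, map_ofNat,
      show ((2:ZMod (p^(e-1))) - 1 = 1) by ring, ← MonoidAlgebra.one_def, mul_one]

end parts

section five
variable (p e : ℕ) (G : Type*) [CommGroup G] [Fintype G]

lemma part5 (hp : p.Prime) (he : 2 ≤ e) :
    Nat.card {u : (MonoidAlgebra (ZMod (p ^ e)) G)ˣ //
        u ∈ Vgrp (ZMod (p ^ e)) G ∧ Units.map (fbar p e G).toMonoidHom u = 1} =
      p ^ (Fintype.card G - 1) := by
  have hequiv : {u : (MonoidAlgebra (ZMod (p ^ e)) G)ˣ //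
        u ∈ Vgrp (ZMod (p ^ e)) G ∧ Units.map (fbar p e G).toMonoidHom u = 1} ≃
      {x : MonoidAlgebra (ZMod (p^e)) G //
        fbar p e G x = 0 ∧ aug (ZMod (p^e)) G x = 0} :=
    { toFun := fun u => ⟨(u.1 : MonoidAlgebra (ZMod (p^e)) G) - 1, by
        have h1 := (map_fbar_eq_one_iff p e u.1).mp u.2.2
        rw [map_sub, h1, map_one, sub_self], by
        have h2 := (mem_Vgrp_iff u.1).mp u.2.1
        rw [map_sub, h2, map_one, sub_self]⟩
      invFun := fun k => ⟨⟨1 + k.1, 1 - k.1,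
          by have := ker_sq_zero p e hp he k.2.1 k.2.1
             calc (1 + k.1) * (1 - k.1) = 1 - k.1 * k.1 := by ring
               _ = 1 := by rw [this, sub_zero],
          by have := ker_sq_zero p e hp he k.2.1 k.2.1
             calc (1 - k.1) * (1 + k.1) = 1 - k.1 * k.1 := by ring
               _ = 1 := by rw [this, sub_zero]⟩, by
        rw [mem_Vgrp_iff]
        show aug (ZMod (p^e)) G (1 + k.1) = 1
        rw [map_add, map_one, k.2.2, add_zero], by
        rw [map_fbar_eq_one_iff]
        show fbar p e G (1 + k.1) = 1
        rw [map_add, map_one, k.2.1, add_zero]⟩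
      left_inv := fun u => Subtype.ext (Units.ext (by simp))
      right_inv := fun k => Subtype.ext (by simp) }
  rw [Nat.card_congr hequiv]
  exact card_Kset p e G hp he

end five

/-- Reduction mod `p^{e-1}` induces a surjection `V(Z_{p^e}G) → V(Z_{p^{e-1}}G)`
whose kernel is `1 + p^{e-1} ω(Z_{p^e}G)`, an elementary abelian `p`-group of
order `p^(|G|-1)`. -/
theorem stmt_6 (p e : ℕ) (hp : p.Prime) (he : 2 ≤ e)
    (G : Type*) [CommGroup G] [Fintype G] (hG : IsPGroup p G) :
    (∀ u ∈ Vgrp (ZMod (p ^ e)) G, Units.map (fbar p e G).toMonoidHom u ∈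
        Vgrp (ZMod (p ^ (e - 1))) G) ∧
      (∀ v ∈ Vgrp (ZMod (p ^ (e - 1))) G, ∃ u ∈ Vgrp (ZMod (p ^ e)) G,
        Units.map (fbar p e G).toMonoidHom u = v) ∧
      (∀ u ∈ Vgrp (ZMod (p ^ e)) G,
        (Units.map (fbar p e G).toMonoidHom u = 1 ↔
          ∃ z ∈ augIdeal (ZMod (p ^ e)) G,
            (u : MonoidAlgebra (ZMod (p ^ e)) G) =
              1 + (p : MonoidAlgebra (ZMod (p ^ e)) G) ^ (e - 1) * z)) ∧
      (∀ u ∈ Vgrp (ZMod (p ^ e)) G, Units.map (fbar p e G).toMonoidHom u = 1 → u ^ p = 1) ∧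
      Nat.card {u : (MonoidAlgebra (ZMod (p ^ e)) G)ˣ //
          u ∈ Vgrp (ZMod (p ^ e)) G ∧ Units.map (fbar p e G).toMonoidHom u = 1} =
        p ^ (Fintype.card G - 1) := by
  exact ⟨fun u hu => part1 p e u hu,
    fun v hv => part2 p e hp he v hv,
    fun u hu => part3 p e hp he u hu,
    fun u _ h => part4 p e hp he u h,
    part5 p e G hp he⟩
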